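/- Let q be even, δ ∈ GF(q) with Tr(δ) = 1, and b₁, b₂ ∈ GF(q)* distinct with Tr(b₁) = Tr(b₂) = 0. Then there is no A ∈ GL(4, GF(q)) and no μ₁, μ₂ ∈ GF(q)* such that φ_A maps X₁X₂ + X₃² + X₃X₄ + δX₄² to μ₁·(X₁X₂ + X₃² + X₃X₄ + δX₄²) and X₁X₂ + X₃² + X₃X₄ + (δ+b₁)X₄² to μ₂·(X₁X₂ + X₃² + X₃X₄ + (δ+b₂)X₄²). -/

import Mathlib

open MvPolynomial

/-- Absolute trace of `GF(2^h)`. -/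
def absTrace {F : Type*} [Field F] (h : ℕ) (x : F) : F :=
  ∑ i ∈ Finset.range h, x ^ (2 ^ i)

/-- The substitution of variables `φ_A` induced by a matrix `A`. -/
noncomputable def substMat {F : Type*} [Field F] (A : Matrix (Fin 4) (Fin 4) F)
    (f : MvPolynomial (Fin 4) F) : MvPolynomial (Fin 4) F :=
  MvPolynomial.aeval (fun i => ∑ j, MvPolynomial.C (A i j) * MvPolynomial.X j) f

/-- The quadratic form `X₁X₂ + X₃² + X₃X₄ + δX₄²` (indices shifted to 0–3). -/
noncomputable def ellForm {F : Type*} [Field F] (δ : F) : MvPolynomial (Fin 4) F :=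
  X 0 * X 1 + X 2 ^ 2 + X 2 * X 3 + C δ * X 3 ^ 2

/-! ### Auxiliary trace lemmas -/

section Tr
variable {F : Type*} [Field F] [Fintype F] (h : ℕ)

lemma mynoSub.char_two (h : ℕ) (hh : 1 ≤ h) (hcard : Fintype.card F = 2 ^ h) :
    CharP F 2 := by
  haveI := ringChar.charP F
  obtain ⟨n, hp, hc⟩ := FiniteField.card F (ringChar F)
  have h2 : ringChar F = 2 := by
    have hd : ringChar F ∣ 2 ^ h := by
      rw [← hcard, hc]; exact dvd_pow_self _ (by positivity)
    have := Nat.Prime.dvd_of_dvd_pow hp hd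
    exact (Nat.prime_dvd_prime_iff_eq hp Nat.prime_two).mp this
  exact h2 ▸ ringChar.charP F

variable [CharP F 2] (hcard : Fintype.card F = 2 ^ h)

omit [Fintype F] in
lemma mynoSub.absTrace_add (x y : F) :
    absTrace h (x + y) = absTrace h x + absTrace h y := by
  haveI : Fact (Nat.Prime 2) := ⟨Nat.prime_two⟩
  simp [absTrace, add_pow_char_pow, Finset.sum_add_distrib]

omit [Fintype F] [CharP F 2] in
lemma mynoSub.absTrace_sq_aux (x : F) :
    absTrace h (x ^ 2) = ∑ i ∈ Finset.range h, x ^ 2 ^ (i + 1) :=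
  Finset.sum_congr rfl fun i _ => by rw [← pow_mul, pow_succ, mul_comm]

include hcard in
lemma mynoSub.absTrace_sq (x : F) : absTrace h (x ^ 2) = absTrace h x := by
  have hq : x ^ 2 ^ h = x := by rw [← hcard]; exact FiniteField.pow_card x
  rw [mynoSub.absTrace_sq_aux]
  have h2 : ∑ i ∈ Finset.range (h+1), x ^ 2 ^ i
      = (∑ i ∈ Finset.range h, x ^ 2 ^ (i+1)) + x ^ 2 ^ 0 := Finset.sum_range_succ' _ _
  have h3 : ∑ i ∈ Finset.range (h+1), x ^ 2 ^ i
      = absTrace h x + x ^ 2 ^ h := Finset.sum_range_succ _ _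
  have key := h2.symm.trans h3
  rw [hq, pow_zero, pow_one] at key
  linear_combination key

include hcard in
lemma mynoSub.absTrace_sq' (x : F) : (absTrace h x) ^ 2 = absTrace h x := by
  haveI : Fact (Nat.Prime 2) := ⟨Nat.prime_two⟩
  have h1 : (absTrace h x) ^ 2 = absTrace h (x ^ 2) := by
    rw [absTrace, sum_pow_char, mynoSub.absTrace_sq_aux]
    exact Finset.sum_congr rfl fun i _ => by rw [← pow_mul, pow_succ]
  rw [h1, mynoSub.absTrace_sq h hcard]

include hcard in
lemma mynoSub.absTrace_eq_zero_or_one (x : F) :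
    absTrace h x = 0 ∨ absTrace h x = 1 := by
  have h1 := mynoSub.absTrace_sq' h hcard x
  have h2 : absTrace h x * (absTrace h x - 1) = 0 := by ring_nf; linear_combination h1
  rcases mul_eq_zero.mp h2 with h1 | h1
  · exact Or.inl h1
  · exact Or.inr (by linear_combination h1)

include hcard in
lemma mynoSub.absTrace_as (t : F) : absTrace h (t ^ 2 + t) = 0 := by
  rw [mynoSub.absTrace_add, mynoSub.absTrace_sq h hcard, CharTwo.add_self_eq_zero]

end Tr

/-! ### Artin–Schreier surjectivity onto the trace kernel -/

section AS
variable {F : Type*} [Field F] [Fintype F] [DecidableEq F] [CharP F 2] (h : ℕ) (hh : 1 ≤ h)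
  (hcard : Fintype.card F = 2 ^ h)

include hh in
omit [CharP F 2] in
lemma mynoSub.ker_card_le :
    (Finset.univ.filter (fun x : F => absTrace h x = 0)).card ≤ 2 ^ (h - 1) := by
  set P : Polynomial F := ∑ i ∈ Finset.range h, Polynomial.X ^ (2 ^ i) with hP
  have hev : ∀ x : F, P.eval x = absTrace h x := by
    intro x; simp [hP, absTrace, Polynomial.eval_finset_sum]
  have hne : P ≠ 0 := by
    intro h0
    have hcoeff : P.coeff (2 ^ (h - 1)) = 1 := by
      rw [hP, Polynomial.finset_sum_coeff]
      have hc : ∀ i ∈ Finset.range h, (Polynomial.X ^ (2^i) : Polynomial F).coeff (2 ^ (h-1))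
          = if i = h - 1 then 1 else 0 := by
        intro i _
        rw [Polynomial.coeff_X_pow]
        congr 1
        simp only [eq_iff_iff]
        constructor
        · intro he; exact (Nat.pow_right_injective (le_refl 2) he.symm)
        · intro he; rw [he]
      rw [Finset.sum_congr rfl hc, Finset.sum_ite_eq' (Finset.range h) (h-1) (fun _ => (1:F))]
      simp [Nat.sub_lt (lt_of_lt_of_le Nat.zero_lt_one hh) Nat.zero_lt_one]
    rw [h0] at hcoeff; simp at hcoeff
  have hdeg : P.natDegree ≤ 2 ^ (h - 1) := by
    apply Polynomial.natDegree_sum_le_of_forall_le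
    intro i hi
    rw [Polynomial.natDegree_X_pow]
    exact Nat.pow_le_pow_right (by norm_num) (by have := Finset.mem_range.mp hi; omega)
  have hsub : (Finset.univ.filter (fun x : F => absTrace h x = 0)) ⊆ P.roots.toFinset := by
    intro x hx
    rw [Finset.mem_filter] at hx
    rw [Multiset.mem_toFinset, Polynomial.mem_roots hne]
    exact (by rw [Polynomial.IsRoot, hev]; exact hx.2)
  calc _ ≤ P.roots.toFinset.card := Finset.card_le_card hsub
    _ ≤ Multiset.card P.roots := Multiset.toFinset_card_le _
    _ ≤ P.natDegree := Polynomial.card_roots' P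
    _ ≤ 2 ^ (h - 1) := hdeg

include hh hcard in
lemma mynoSub.exists_as_root {c : F} (hc : absTrace h c = 0) : ∃ t : F, t ^ 2 + t = c := by
  have h2 : (2 : F) = 0 := by exact_mod_cast CharP.cast_eq_zero F 2
  set s : F → F := fun t => t ^ 2 + t with hs
  set I : Finset F := Finset.univ.image s with hI
  set K : Finset F := Finset.univ.filter (fun x : F => absTrace h x = 0) with hK
  have hIK : I ⊆ K := by
    intro y hy
    rw [hI, Finset.mem_image] at hy
    obtain ⟨t, _, ht⟩ := hy
    rw [hK, Finset.mem_filter]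
    exact ⟨Finset.mem_univ _, by rw [← ht]; exact mynoSub.absTrace_as h hcard t⟩
  have hfib : ∀ y ∈ I, (Finset.univ.filter (fun t : F => s t = y)).card = 2 := by
    intro y hy
    rw [hI, Finset.mem_image] at hy
    obtain ⟨t, _, ht⟩ := hy
    have key : ∀ u : F, s u = y ↔ (u = t ∨ u = t + 1) := by
      intro u
      rw [← ht, hs]
      simp only
      constructor
      · intro hu
        have hfac : (u - t) * (u - (t + 1)) = 0 := by
          linear_combination hu + (t^2 + t - u*t - u) * h2
        rcases mul_eq_zero.mp hfac with h1 | h1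
        · exact Or.inl (sub_eq_zero.mp h1)
        · exact Or.inr (sub_eq_zero.mp h1)
      · rintro (rfl | rfl)
        · rfl
        · linear_combination (t + 1) * h2
    have hset : Finset.univ.filter (fun u : F => s u = y) = {t, t + 1} := by
      ext u
      simp only [Finset.mem_filter, Finset.mem_univ, true_and, Finset.mem_insert,
        Finset.mem_singleton]
      exact key u
    rw [hset, Finset.card_insert_of_notMem, Finset.card_singleton]
    simp only [Finset.mem_singleton]
    intro habs
    have h1 : t + 0 = t + 1 := by simpa using habs
    exact one_ne_zero (add_left_cancel h1).symm
  have hcount : Fintype.card F = I.card * 2 := by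
    rw [← Finset.card_univ, Finset.card_eq_sum_card_image s Finset.univ, ← hI]
    rw [Finset.sum_congr rfl hfib, Finset.sum_const, smul_eq_mul]
  have hIcard : I.card = 2 ^ (h - 1) := by
    have hpow : 2 ^ h = 2 ^ (h - 1) * 2 := by
      conv_lhs => rw [← Nat.sub_add_cancel hh]
      rw [pow_succ]
    have hc2 := hcount
    rw [hcard, hpow] at hc2
    omega
  have hKI : K = I := (Finset.eq_of_subset_of_card_le hIK
    (by rw [hIcard]; exact mynoSub.ker_card_le h hh)).symm
  have hcK : c ∈ K := by rw [hK, Finset.mem_filter]; exact ⟨Finset.mem_univ _, hc⟩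
  rw [hKI, hI, Finset.mem_image] at hcK
  obtain ⟨t, _, ht⟩ := hcK
  exact ⟨t, ht⟩

include hh hcard in
lemma mynoSub.exists_trace_ne {c : F} (hc : c ≠ 0) :
    ∃ lam : F, absTrace h (lam * c) ≠ 0 := by
  by_contra hall
  push_neg at hall
  have hK : (Finset.univ.filter (fun x : F => absTrace h x = 0)) = Finset.univ := by
    apply Finset.eq_univ_of_forall
    intro x
    rw [Finset.mem_filter]
    refine ⟨Finset.mem_univ _, ?_⟩
    have := hall (x * c⁻¹)
    rwa [mul_assoc, inv_mul_cancel₀ hc, mul_one] at this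
  have h1 := mynoSub.ker_card_le (F := F) h hh
  rw [hK, Finset.card_univ, hcard] at h1
  have h2 : 2 ^ (h - 1) < 2 ^ h := Nat.pow_lt_pow_right (by norm_num) (by omega)
  omega

end AS

/-! ### Counting zeros of the quadratic forms -/

section Count
variable {F : Type*} [Field F] [Fintype F] [DecidableEq F]

/-- The quadratic form as a function. -/
def mynoSub.eF (c : F) (x : Fin 4 → F) : F := x 0 * x 1 + x 2 ^ 2 + x 2 * x 3 + c * x 3 ^ 2

open mynoSub

def mynoSub.quadEquiv (F : Type*) : ((F × F) × (F × F)) ≃ (Fin 4 → F) where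
  toFun p := ![p.1.1, p.1.2, p.2.1, p.2.2]
  invFun x := ((x 0, x 1), (x 2, x 3))
  left_inv p := rfl
  right_inv x := by funext i; fin_cases i <;> rfl

/-- Number of zeros of the quadratic form. -/
def mynoSub.NN (c : F) : ℕ := (Finset.univ.filter (fun x : Fin 4 → F => eF c x = 0)).card

/-- Number of zeros of the binary part. -/
def mynoSub.ZZ (c : F) : ℕ :=
  ∑ z : F × F, if z.1 ^ 2 + z.1 * z.2 + c * z.2 ^ 2 = 0 then 1 else 0

lemma mynoSub.sum_if_zero (X Y : ℕ) : (∑ a : F, if a = 0 then X else Y)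
    = X + Y * (Fintype.card F - 1) := by
  rw [← Finset.add_sum_erase _ _ (Finset.mem_univ (0:F)), if_pos rfl]
  congr 1
  rw [Finset.sum_congr rfl (fun a ha => if_neg (Finset.ne_of_mem_erase ha))]
  simp [Finset.card_erase_of_mem, mul_comm]

lemma mynoSub.W_val (s : F) : (∑ p : F × F, if p.1 * p.2 + s = 0 then (1:ℕ) else 0)
    = if s = 0 then Fintype.card F + (Fintype.card F - 1) else Fintype.card F - 1 := by
  rw [Fintype.sum_prod_type]
  have inner : ∀ a : F, (∑ b : F, if a * b + s = 0 then (1:ℕ) else 0)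
      = if a = 0 then (if s = 0 then Fintype.card F else 0) else 1 := by
    intro a
    by_cases ha : a = 0
    · subst ha
      simp only [zero_mul, zero_add, if_pos rfl]
      by_cases hs : s = 0
      · simp [hs, Finset.card_univ]
      · simp [hs]
    · rw [if_neg ha]
      have hcong : ∀ b : F, (a * b + s = 0) = (b = -s * a⁻¹) := by
        intro b
        simp only [eq_iff_iff]
        constructor
        · intro hb; field_simp; linear_combination hb
        · intro hb; subst hb; field_simp; ring
      simp only [hcong]
      rw [Finset.sum_ite_eq' Finset.univ (-s * a⁻¹) (fun _ => (1:ℕ))]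
      simp
  rw [Finset.sum_congr rfl (fun a _ => inner a), mynoSub.sum_if_zero]
  by_cases hs : s = 0 <;> simp [hs]

variable [CharP F 2] (h : ℕ) (hh : 1 ≤ h) (hcard : Fintype.card F = 2 ^ h)

include hcard in
lemma mynoSub.ZZ_of_trace_ne (c : F) (hc : absTrace h c ≠ 0) : ZZ c = 1 := by
  have h2 : (2 : F) = 0 := by exact_mod_cast CharP.cast_eq_zero F 2
  have key : ∀ z : F × F, (z.1 ^ 2 + z.1 * z.2 + c * z.2 ^ 2 = 0) = (z = (0, 0)) := by
    rintro ⟨u, v⟩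
    simp only [eq_iff_iff, Prod.mk.injEq]
    constructor
    · intro heq
      by_cases hv : v = 0
      · subst hv
        simp only [mul_zero, add_zero, zero_pow, ne_eq, OfNat.ofNat_ne_zero,
          not_false_eq_true] at heq
        have : u ^ 2 = 0 := by linear_combination heq
        exact ⟨pow_eq_zero_iff (by norm_num) |>.mp this, rfl⟩
      · exfalso
        have hvinv : v * v⁻¹ = 1 := mul_inv_cancel₀ hv
        have hcv : c * v ^ 2 = u ^ 2 + u * v := by
          linear_combination -heq + (c * v ^ 2) * h2
        have hcas : c = (u * v⁻¹) ^ 2 + (u * v⁻¹) := by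
          linear_combination (v⁻¹^2) * hcv + (u*v⁻¹ - c*(v*v⁻¹+1)) * hvinv
        apply hc
        rw [hcas]
        exact mynoSub.absTrace_as h hcard _
    · rintro ⟨rfl, rfl⟩; ring
  rw [ZZ]
  simp only [key]
  rw [Finset.sum_ite_eq' Finset.univ ((0:F), (0:F)) (fun _ => (1:ℕ))]
  simp

include hh hcard in
lemma mynoSub.ZZ_of_trace_eq (c : F) (hc : absTrace h c = 0) :
    ZZ c = 1 + 2 * (Fintype.card F - 1) := by
  have h2 : (2 : F) = 0 := by exact_mod_cast CharP.cast_eq_zero F 2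
  obtain ⟨t, ht⟩ := mynoSub.exists_as_root h hh hcard hc
  have key : ∀ u v : F, (u ^ 2 + u * v + c * v ^ 2 = 0) = (u = t * v ∨ u = (t+1) * v) := by
    intro u v
    simp only [eq_iff_iff]
    constructor
    · intro heq
      have hfac : (u - t * v) * (u - (t + 1) * v) = 0 := by
        linear_combination heq + (t*v^2 + t^2*v^2 - c*v^2 - u*v*t - u*v) * h2 + (- v^2) * ht
      rcases mul_eq_zero.mp hfac with h1 | h1
      · exact Or.inl (sub_eq_zero.mp h1)
      · exact Or.inr (sub_eq_zero.mp h1)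
    · rintro (rfl | rfl)
      · linear_combination (t*v^2 + t^2*v^2) * h2 + (-v^2) * ht
      · linear_combination (2*t*v^2 + t^2*v^2 + v^2) * h2 + (-v^2) * ht
  rw [ZZ, Fintype.sum_prod_type_right]
  have inner : ∀ v : F, (∑ u : F, if u ^ 2 + u * v + c * v ^ 2 = 0 then (1:ℕ) else 0)
      = if v = 0 then 1 else 2 := by
    intro v
    simp only [key]
    by_cases hv : v = 0
    · subst hv
      rw [if_pos rfl]
      have huz : ∀ u : F, (u = t * 0 ∨ u = (t+1) * 0) = (u = 0) := fun u => by simp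
      simp only [huz]
      rw [Finset.sum_ite_eq' Finset.univ (0:F) (fun _ => (1:ℕ))]
      simp
    · rw [if_neg hv]
      have hne : t * v ≠ (t + 1) * v := by
        intro habs
        apply hv
        have hv0 : t * v + v = t * v + 0 := by linear_combination habs.symm
        exact add_left_cancel hv0
      have hsum : (∑ u : F, if u = t * v ∨ u = (t+1) * v then (1:ℕ) else 0)
          = ({t * v, (t+1) * v} : Finset F).card := by
        rw [Finset.card_eq_sum_ones]
        rw [← Finset.sum_filter_add_sum_filter_not Finset.univ
          (fun u => u = t * v ∨ u = (t+1) * v)]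
        simp only [Finset.sum_ite_of_true (fun u hu => (Finset.mem_filter.mp hu).2),
          Finset.sum_ite_of_false (fun u hu => (Finset.mem_filter.mp hu).2), Finset.sum_const,
          smul_eq_mul, mul_one, mul_zero, add_zero]
        congr 1
        ext u
        simp [Finset.mem_filter]
      rw [hsum, Finset.card_insert_of_notMem (by simpa using hne), Finset.card_singleton]
  rw [Finset.sum_congr rfl (fun v _ => inner v), mynoSub.sum_if_zero]

omit [DecidableEq F] in
lemma mynoSub.eF_shift (c d : F) (x : Fin 4 → F) :
    eF (c + d) x = eF c x + d * (x 3) ^ 2 := by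
  simp [eF]; ring

lemma mynoSub.NN_eq (c : F) :
    NN c = (Fintype.card F)^2 * (Fintype.card F - 1) + (Fintype.card F) * ZZ c := by
  rw [NN, Finset.card_filter]
  rw [← Equiv.sum_comp (quadEquiv F) (fun x : Fin 4 → F => if eF c x = 0 then (1:ℕ) else 0)]
  have hval : ∀ p : (F × F) × (F × F),
      eF c (quadEquiv F p) = p.1.1 * p.1.2 + (p.2.1 ^ 2 + p.2.1 * p.2.2 + c * p.2.2 ^ 2) := by
    rintro ⟨⟨a, b⟩, ⟨u, v⟩⟩
    show eF c ![a, b, u, v] = _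
    simp [eF, quadEquiv]
    ring
  simp only [hval]
  rw [Fintype.sum_prod_type_right]   -- sum over second coordinate outside
  have inner : ∀ z : F × F, (∑ p : F × F,
      if p.1 * p.2 + (z.1 ^ 2 + z.1 * z.2 + c * z.2 ^ 2) = 0 then (1:ℕ) else 0)
      = (Fintype.card F - 1) + (if z.1 ^ 2 + z.1 * z.2 + c * z.2 ^ 2 = 0
          then Fintype.card F else 0) := by
    intro z
    rw [mynoSub.W_val]
    by_cases hz : z.1 ^ 2 + z.1 * z.2 + c * z.2 ^ 2 = 0 <;> simp [hz] <;> omega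
  rw [Finset.sum_congr rfl (fun z _ => inner z)]
  rw [Finset.sum_add_distrib, Finset.sum_const, Finset.card_univ, Fintype.card_prod]
  rw [ZZ, Finset.mul_sum]
  congr 1
  · rw [smul_eq_mul, pow_two]
  · exact Finset.sum_congr rfl (fun z _ => by by_cases hz : z.1 ^ 2 + z.1 * z.2 + c * z.2 ^ 2 = 0 <;> simp [hz])

include hh hcard in
lemma mynoSub.trace_zero_iff_of_NN_eq {c₁ c₂ : F} (hNN : NN c₁ = NN c₂) :
    (absTrace h c₁ = 0) ↔ (absTrace h c₂ = 0) := by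
  have hq2 : 2 ≤ Fintype.card F := by
    rw [hcard]
    calc 2 = 2 ^ 1 := (pow_one 2).symm
    _ ≤ 2 ^ h := Nat.pow_le_pow_right (by norm_num) hh
  have hZZ : ZZ c₁ = ZZ c₂ := by
    have h1 := mynoSub.NN_eq (c := c₁)
    have h2 := mynoSub.NN_eq (c := c₂)
    rw [h1, h2] at hNN
    have := Nat.add_left_cancel hNN
    exact Nat.eq_of_mul_eq_mul_left (by omega) this
  constructor
  · intro hc1
    by_contra hc2
    rw [mynoSub.ZZ_of_trace_eq h hh hcard c₁ hc1, mynoSub.ZZ_of_trace_ne h hcard c₂ hc2] at hZZ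
    omega
  · intro hc2
    by_contra hc1
    rw [mynoSub.ZZ_of_trace_eq h hh hcard c₂ hc2, mynoSub.ZZ_of_trace_ne h hcard c₁ hc1] at hZZ
    omega

end Count

/-! ### Evaluation of substituted polynomials -/

section Eval
variable {F : Type*} [Field F]

lemma mynoSub.eval_substMat (A : Matrix (Fin 4) (Fin 4) F) (f : MvPolynomial (Fin 4) F)
    (x : Fin 4 → F) :
    MvPolynomial.eval x (substMat A f) = MvPolynomial.eval (A.mulVec x) f := by
  induction f using MvPolynomial.induction_on with
  | C a => simp [substMat]
  | add p q hp hq => simp only [substMat, map_add] at *; rw [hp, hq]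
  | mul_X p i hp =>
      simp only [substMat, map_mul] at *
      rw [hp]
      congr 1
      simp [Matrix.mulVec, dotProduct]

lemma mynoSub.eval_ellForm (c : F) (v : Fin 4 → F) :
    MvPolynomial.eval v (ellForm c) = mynoSub.eF c v := by
  simp [ellForm, mynoSub.eF]

end Eval

/-- For `Tr(δ) = 1` and distinct nonzero `b₁, b₂` of trace `0`, no invertible
linear substitution maps `X₁X₂+X₃²+X₃X₄+δX₄²` to a nonzero multiple of itself
while mapping `X₁X₂+X₃²+X₃X₄+(δ+b₁)X₄²` to a nonzero multiple of
`X₁X₂+X₃²+X₃X₄+(δ+b₂)X₄²`. -/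
theorem no_substitution_between_forms_up_to_scalar
    (F : Type*) [Field F] [Fintype F] (h : ℕ) (hh : 1 ≤ h)
    (hcard : Fintype.card F = 2 ^ h)
    (δ b₁ b₂ : F) (hδ : absTrace h δ = 1)
    (hb₁ : b₁ ≠ 0) (hb₂ : b₂ ≠ 0) (hne : b₁ ≠ b₂)
    (ht₁ : absTrace h b₁ = 0) (ht₂ : absTrace h b₂ = 0) :
    ¬ ∃ (A : Matrix (Fin 4) (Fin 4) F) (μ₁ μ₂ : F), IsUnit A ∧
      μ₁ ≠ 0 ∧ μ₂ ≠ 0 ∧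
      substMat A (ellForm δ) = C μ₁ * ellForm δ ∧
      substMat A (ellForm (δ + b₁)) = C μ₂ * ellForm (δ + b₂) := by
  classical
  haveI : CharP F 2 := mynoSub.char_two h hh hcard
  have h2 : (2 : F) = 0 := by exact_mod_cast CharP.cast_eq_zero F 2
  rintro ⟨A, μ₁, μ₂, hA, hμ₁, hμ₂, heq₁, heq₂⟩
  open mynoSub in
  -- pointwise versions
  have H1 : ∀ x : Fin 4 → F, eF δ (A.mulVec x) = μ₁ * eF δ x := by
    intro x
    have := congrArg (MvPolynomial.eval x) heq₁
    rwa [mynoSub.eval_substMat, map_mul, MvPolynomial.eval_C,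
      mynoSub.eval_ellForm, mynoSub.eval_ellForm] at this
  have H2 : ∀ x : Fin 4 → F, eF (δ + b₁) (A.mulVec x) = μ₂ * eF (δ + b₂) x := by
    intro x
    have := congrArg (MvPolynomial.eval x) heq₂
    rwa [mynoSub.eval_substMat, map_mul, MvPolynomial.eval_C,
      mynoSub.eval_ellForm, mynoSub.eval_ellForm] at this
  have D : ∀ x : Fin 4 → F, b₁ * ((A.mulVec x) 3)^2
      = (μ₂ - μ₁) * eF δ x + μ₂ * b₂ * (x 3)^2 := by
    intro x
    have hh2 := H2 x
    rw [mynoSub.eF_shift, mynoSub.eF_shift] at hh2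
    linear_combination hh2 - H1 x
  -- evaluate at basis-type vectors
  have hv0 : (A.mulVec ![1,0,0,0]) 3 = A 3 0 := by
    simp [Matrix.mulVec, dotProduct, Fin.sum_univ_four]
  have hv1 : (A.mulVec ![0,1,0,0]) 3 = A 3 1 := by
    simp [Matrix.mulVec, dotProduct, Fin.sum_univ_four]
  have hv01 : (A.mulVec ![1,1,0,0]) 3 = A 3 0 + A 3 1 := by
    simp [Matrix.mulVec, dotProduct, Fin.sum_univ_four]
  have heF0 : eF δ ![1,0,0,0] = 0 := by simp [eF]
  have heF1 : eF δ ![0,1,0,0] = 0 := by simp [eF]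
  have heF01 : eF δ ![1,1,0,0] = 1 := by simp [eF]
  have hx3a : (![1,0,0,0] : Fin 4 → F) 3 = 0 := by simp
  have hx3b : (![0,1,0,0] : Fin 4 → F) 3 = 0 := by simp
  have hx3c : (![1,1,0,0] : Fin 4 → F) 3 = 0 := by simp
  have hA30 : A 3 0 = 0 := by
    have hD := D ![1,0,0,0]
    rw [hv0, heF0, hx3a] at hD
    have hz : A 3 0 ^ 2 = 0 := by
      rcases mul_eq_zero.mp (by linear_combination hD : b₁ * (A 3 0)^2 = 0) with hc | hc
      · exact absurd hc hb₁
      · exact hc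
    exact pow_eq_zero_iff (by norm_num) |>.mp hz
  have hA31 : A 3 1 = 0 := by
    have hD := D ![0,1,0,0]
    rw [hv1, heF1, hx3b] at hD
    have hz : A 3 1 ^ 2 = 0 := by
      rcases mul_eq_zero.mp (by linear_combination hD : b₁ * (A 3 1)^2 = 0) with hc | hc
      · exact absurd hc hb₁
      · exact hc
    exact pow_eq_zero_iff (by norm_num) |>.mp hz
  have hμeq : μ₂ = μ₁ := by
    have hD := D ![1,1,0,0]
    rw [hv01, hA30, hA31, heF01, hx3c] at hD
    linear_combination -hD
  -- simplified identity
  have D' : ∀ x : Fin 4 → F, b₁ * ((A.mulVec x) 3)^2 = μ₁ * b₂ * (x 3)^2 := by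
    intro x
    have := D x
    rw [hμeq] at this
    linear_combination this
  -- key pencil identity
  have key : ∀ lam : F, ∀ x : Fin 4 → F,
      eF (δ + lam * b₁) (A.mulVec x) = μ₁ * eF (δ + lam * b₂) x := by
    intro lam x
    rw [mynoSub.eF_shift, mynoSub.eF_shift]
    linear_combination H1 x + lam * D' x
  -- invertibility
  have hdet : IsUnit A.det := Matrix.isUnit_iff_isUnit_det A |>.mp hA
  have hAB : A * A⁻¹ = 1 := Matrix.mul_nonsing_inv A hdet
  have hBA : A⁻¹ * A = 1 := Matrix.nonsing_inv_mul A hdet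
  have hinj : Function.Injective (A.mulVec) := by
    intro x y hxy
    have : A⁻¹.mulVec (A.mulVec x) = A⁻¹.mulVec (A.mulVec y) := by rw [hxy]
    rwa [Matrix.mulVec_mulVec, Matrix.mulVec_mulVec, hBA, Matrix.one_mulVec,
      Matrix.one_mulVec] at this
  -- equality of zero counts along the pencil
  have hNN : ∀ lam : F, NN (δ + lam * b₁) = NN (δ + lam * b₂) := by
    intro lam
    rw [NN, NN]
    refine (Finset.card_bij (fun x _ => A.mulVec x) ?_ ?_ ?_).symm
    · intro x hx
      rw [Finset.mem_filter] at hx ⊢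
      refine ⟨Finset.mem_univ _, ?_⟩
      rw [key lam x, hx.2, mul_zero]
    · intro x _ y _ hxy
      exact hinj hxy
    · intro y hy
      rw [Finset.mem_filter] at hy
      refine ⟨A⁻¹.mulVec y, ?_, ?_⟩
      · rw [Finset.mem_filter]
        refine ⟨Finset.mem_univ _, ?_⟩
        have hAy : A.mulVec (A⁻¹.mulVec y) = y := by
          rw [Matrix.mulVec_mulVec, hAB, Matrix.one_mulVec]
        have := key lam (A⁻¹.mulVec y)
        rw [hAy, hy.2] at this
        exact (mul_eq_zero.mp this.symm).resolve_left hμ₁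
      · show A.mulVec (A⁻¹.mulVec y) = y
        rw [Matrix.mulVec_mulVec, hAB, Matrix.one_mulVec]
  -- pick lam separating the traces
  have hbne : b₁ + b₂ ≠ 0 := by
    intro habs
    apply hne
    have : b₁ + b₂ + b₂ = b₂ := by rw [habs]; ring
    rwa [add_assoc, CharTwo.add_self_eq_zero, add_zero] at this
  obtain ⟨lam, hlam⟩ := mynoSub.exists_trace_ne h hh hcard hbne
  -- traces of the two pencil members differ
  have htr : ¬ ((absTrace h (δ + lam * b₁) = 0) ↔ (absTrace h (δ + lam * b₂) = 0)) := by
    intro hiff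
    apply hlam
    have hsplit : lam * (b₁ + b₂) = lam * b₁ + lam * b₂ := by ring
    rw [hsplit, mynoSub.absTrace_add]
    have e1 := mynoSub.absTrace_add (F := F) h δ (lam * b₁)
    have e2 := mynoSub.absTrace_add (F := F) h δ (lam * b₂)
    rcases mynoSub.absTrace_eq_zero_or_one h hcard (lam * b₁) with p1 | p1 <;>
      rcases mynoSub.absTrace_eq_zero_or_one h hcard (lam * b₂) with p2 | p2
    · rw [p1, p2, add_zero]
    · exfalso
      rw [p1, add_zero] at e1
      rw [p2] at e2
      rcases mynoSub.absTrace_eq_zero_or_one h hcard δ with pd | pd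
      · have : absTrace h (δ + lam * b₁) = 0 := by rw [e1, pd]
        have h21 := hiff.mp this
        rw [e2, pd, zero_add] at h21
        exact one_ne_zero h21
      · have : absTrace h (δ + lam * b₂) = 0 := by rw [e2, pd]; linear_combination h2
        have h21 := hiff.mpr this
        rw [e1, pd] at h21
        exact one_ne_zero h21
    · exfalso
      rw [p2, add_zero] at e2
      rw [p1] at e1
      rcases mynoSub.absTrace_eq_zero_or_one h hcard δ with pd | pd
      · have : absTrace h (δ + lam * b₂) = 0 := by rw [e2, pd]
        have h21 := hiff.mpr this
        rw [e1, pd, zero_add] at h21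
        exact one_ne_zero h21
      · have : absTrace h (δ + lam * b₁) = 0 := by rw [e1, pd]; linear_combination h2
        have h21 := hiff.mp this
        rw [e2, pd] at h21
        exact one_ne_zero h21
    · rw [p1, p2]; linear_combination h2
  exact htr (mynoSub.trace_zero_iff_of_NN_eq h hh hcard (hNN lam))
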